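/- Let m ≥ 1 and let f be a smooth real-valued function on an open neighborhood W of 0 in ℝ × ℝ^m, written f(t,y). Suppose f(t,y) ≥ 0 whenever (t,y) ∈ W and t ≥ 0, that f(0,0) = 0, that all first-order partial derivatives of f vanish at (0,0), and that ∂²f/∂t²(0,0) = 0. Then ∂²f/∂t∂y_j(0,0) = 0 for every j = 1,…,m. -/

import Mathlib

set_option maxHeartbeats 1000000


/-- Scaling lemma: if `f(t, y) ≥ 0` for `t ≥ 0` near the origin, `f` vanishes to first
order at the origin and `∂²f/∂t²(0,0) = 0`, then all the mixed derivatives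
`∂²f/∂t∂yⱼ(0,0)` vanish. -/
theorem mixed_derivatives_vanish (m : ℕ) (hm : 1 ≤ m)
    (W : Set (ℝ × (Fin m → ℝ))) (hW : IsOpen W)
    (h0W : ((0 : ℝ), (0 : Fin m → ℝ)) ∈ W)
    (f : ℝ × (Fin m → ℝ) → ℝ) (hf : ContDiffOn ℝ (⊤ : ℕ∞) f W)
    (hnn : ∀ z ∈ W, 0 ≤ z.1 → 0 ≤ f z)
    (hf0 : f (0, 0) = 0)
    (hgrad : fderiv ℝ f (0, 0) = 0)
    (htt : fderiv ℝ (fun z => fderiv ℝ f z ((1 : ℝ), (0 : Fin m → ℝ))) (0, 0)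
        ((1 : ℝ), (0 : Fin m → ℝ)) = 0) :
    ∀ j : Fin m,
      fderiv ℝ (fun z => fderiv ℝ f z ((1 : ℝ), (0 : Fin m → ℝ))) (0, 0)
        ((0 : ℝ), Pi.single j 1) = 0 := by
  intro j
  have h00 : ((0 : ℝ), (0 : Fin m → ℝ)) = (0 : ℝ × (Fin m → ℝ)) := rfl
  rw [h00] at h0W hf0 hgrad htt ⊢
  set u : ℝ × (Fin m → ℝ) := ((1 : ℝ), (0 : Fin m → ℝ)) with hu
  set w : ℝ × (Fin m → ℝ) := ((0 : ℝ), Pi.single j 1) with hw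
  -- basic differentiability facts
  have hfd : ∀ z ∈ W, HasFDerivAt f (fderiv ℝ f z) z := by
    intro z hz
    exact (((hf.differentiableOn (by simp)) z hz).differentiableAt
      (hW.mem_nhds hz)).hasFDerivAt
  have hf' : ContDiffOn ℝ (⊤ : ℕ∞) (fderiv ℝ f) W :=
    hf.fderiv_of_isOpen hW (by exact_mod_cast le_refl _)
  have hf'dW : ∀ z ∈ W, DifferentiableAt ℝ (fderiv ℝ f) z := by
    intro z hz
    exact ((hf'.differentiableOn (by simp)) z hz).differentiableAt (hW.mem_nhds hz)
  set f'' : ℝ × (Fin m → ℝ) →L[ℝ] (ℝ × (Fin m → ℝ)) →L[ℝ] ℝ := fderiv ℝ (fderiv ℝ f) 0 with hf''def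
  have hf'' : HasFDerivAt (fderiv ℝ f) f'' 0 := (hf'dW 0 h0W).hasFDerivAt
  have hev : ∀ᶠ y in nhds (0 : ℝ × (Fin m → ℝ)), HasFDerivAt f (fderiv ℝ f y) y :=
    Filter.eventually_of_mem (hW.mem_nhds h0W) hfd
  have hsym : ∀ a b : ℝ × (Fin m → ℝ), f'' a b = f'' b a := fun a b =>
    second_derivative_symmetric_of_eventually hev hf'' a b
  -- expressing the iterated directional derivatives via f''
  have hA : ∀ a b : ℝ × (Fin m → ℝ), fderiv ℝ (fun z => fderiv ℝ f z a) 0 b = f'' b a := by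
    intro a b
    rw [fderiv_clm_apply (hf'dW 0 h0W) (differentiableAt_const a)]
    simp [hf''def]
  -- key inequality: the quadratic form is nonneg on u + c • w
  have key : ∀ c : ℝ, 0 ≤ f'' (u + c • w) (u + c • w) := by
    intro c
    set v : ℝ × (Fin m → ℝ) := u + c • w with hv
    have hv1 : v.1 = 1 := by simp [hv, hu, hw]
    set γ : ℝ → ℝ × (Fin m → ℝ) := fun t => t • v with hγdef
    have hγ0 : γ 0 = 0 := by simp [hγdef]
    have hγcont : Continuous γ := by fun_prop
    have hmemev : ∀ᶠ t in nhds (0 : ℝ), γ t ∈ W := by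
      have := hγcont.continuousAt (x := (0 : ℝ))
      exact this.eventually_mem (by rw [hγ0]; exact hW.mem_nhds h0W)
    obtain ⟨δ, hδpos, hδ⟩ := Metric.eventually_nhds_iff.1 hmemev
    have hδ' : ∀ t : ℝ, |t| < δ → γ t ∈ W := by
      intro t ht
      exact hδ (by simpa [Real.dist_eq] using ht)
    set g : ℝ → ℝ := fun t => f (γ t) with hgdef
    set g' : ℝ → ℝ := fun t => fderiv ℝ f (γ t) v with hg'def
    have hγd : ∀ t : ℝ, HasDerivAt γ v t := by
      intro t
      simpa using (hasDerivAt_id t).smul_const v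
    have hgd : ∀ t : ℝ, |t| < δ → HasDerivAt g (g' t) t := by
      intro t ht
      exact (hfd (γ t) (hδ' t ht)).comp_hasDerivAt t (hγd t)
    have hg'0 : g' 0 = 0 := by simp [hg'def, hγ0, hgrad]
    have hg0 : g 0 = 0 := by simp [hgdef, hγ0, hf0]
    have hgnn : ∀ t : ℝ, 0 ≤ t → |t| < δ → 0 ≤ g t := by
      intro t ht hlt
      refine hnn (γ t) (hδ' t hlt) ?_
      simp only [hγdef, Prod.smul_fst, hv1, smul_eq_mul, mul_one]
      exact ht
    -- g' has derivative f'' v v at 0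
    have hg'd : HasDerivAt g' (f'' v v) 0 := by
      have h1 : HasFDerivAt (fun z : ℝ × (Fin m → ℝ) => fderiv ℝ f z v) (f''.flip v) 0 := by
        have := hf''.clm_apply (hasFDerivAt_const v (0 : ℝ × (Fin m → ℝ)))
        simpa using this
      rw [← hγ0] at h1
      have := h1.comp_hasDerivAt 0 (hγd 0)
      exact this
    by_contra hcon
    push_neg at hcon
    -- g' is eventually negative on the right of 0
    have hslope : Filter.Tendsto (fun t => g' t / t) (nhdsWithin 0 {(0:ℝ)}ᶜ)
        (nhds (f'' v v)) := by
      have := hasDerivAt_iff_tendsto_slope.1 hg'd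
      simpa [slope_fun_def_field, hg'0] using this
    have hneg : ∀ᶠ t in nhdsWithin (0:ℝ) (Set.Ioi 0), g' t < 0 := by
      have hle : nhdsWithin (0:ℝ) (Set.Ioi 0) ≤ nhdsWithin 0 {(0:ℝ)}ᶜ :=
        nhdsWithin_mono 0 (fun t ht => ne_of_gt ht)
      have h2 : ∀ᶠ t in nhdsWithin (0:ℝ) (Set.Ioi 0), g' t / t < 0 :=
        (hslope.mono_left hle).eventually (Filter.Tendsto.eventually_lt_const hcon
          Filter.tendsto_id)
      filter_upwards [h2, self_mem_nhdsWithin] with t ht1 (ht2 : t ∈ Set.Ioi 0)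
      by_contra hge
      push_neg at hge
      exact absurd (div_nonneg hge (le_of_lt ht2)) (not_le.2 ht1)
    obtain ⟨ε, hε0, hεsub⟩ := mem_nhdsGT_iff_exists_Ioo_subset.1 hneg
    have hε0' : (0:ℝ) < ε := hε0
    set T : ℝ := min (ε / 2) (δ / 2) with hT
    have hT0 : 0 < T := lt_min (by linarith) (by linarith)
    have hTδ : T < δ := lt_of_le_of_lt (min_le_right _ _) (by linarith)
    have hTε : T < ε := lt_of_le_of_lt (min_le_left _ _) (by linarith)
    have hcontg : ContinuousOn g (Set.Icc 0 T) := by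
      intro t ht
      have : |t| < δ := by
        rw [abs_of_nonneg ht.1]; exact lt_of_le_of_lt ht.2 hTδ
      exact ((hgd t this).continuousAt).continuousWithinAt
    have hderivg : ∀ t ∈ Set.Ioo 0 T, HasDerivAt g (g' t) t := by
      intro t ht
      have : |t| < δ := by
        rw [abs_of_nonneg (le_of_lt ht.1)]; exact lt_trans ht.2 hTδ
      exact hgd t this
    obtain ⟨ξ, hξmem, hξ⟩ := exists_hasDerivAt_eq_slope g g' hT0 hcontg hderivg
    have hgT : 0 ≤ g T := hgnn T (le_of_lt hT0)
      (by rw [abs_of_nonneg (le_of_lt hT0)]; exact hTδ)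
    have h1 : 0 ≤ g' ξ := by
      rw [hξ, hg0]
      exact div_nonneg (by linarith) (by linarith)
    have h2 : g' ξ < 0 := hεsub ⟨hξmem.1, lt_trans hξmem.2 hTε⟩
    linarith
  -- conclude via the quadratic inequality
  have htt' : f'' u u = 0 := by rw [← hA u u]; exact htt
  set a : ℝ := f'' u w with ha
  set b : ℝ := f'' w w with hb
  clear_value a b
  have hquad : ∀ c : ℝ, 0 ≤ 2 * a * c + b * c ^ 2 := by
    intro c
    have := key c
    simp only [map_add, map_smul, ContinuousLinearMap.add_apply,
      ContinuousLinearMap.smul_apply, smul_eq_mul] at this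
    rw [htt'] at this
    have hsw : f'' w u = a := by rw [ha]; exact hsym w u
    rw [hsw, ← ha, ← hb] at this
    ring_nf at this ⊢
    linarith [this]
  have ha0 : a = 0 := by
    by_contra hne
    have ha2 : 0 < a ^ 2 := by positivity
    set t : ℝ := 1 / (|b| + 1) with htdef
    have habs : 0 ≤ |b| := abs_nonneg b
    have ht0 : 0 < t := by positivity
    have hbt : b * t < 2 := by
      have h1 : b * t ≤ |b| * t := mul_le_mul_of_nonneg_right (le_abs_self b) ht0.le
      have h2 : |b| * t < 1 := by
        rw [htdef, mul_one_div, div_lt_one (by linarith)]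
        linarith
      linarith
    have hkey := hquad (-a * t)
    nlinarith [hkey, mul_pos ht0 ha2, mul_lt_mul_of_pos_right hbt (mul_pos ht0 ha2)]
  rw [hA u w]
  have : f'' w u = a := by rw [ha]; exact hsym w u
  rw [this]
  exact ha0
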